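/- Fix a real number β with 1/2 < β < 1 and an integer t ≥ 5. Then the number of integers n with e^{t−1} < n ≤ e^t such that Z(n) < n^β is at most 196 · t² · e^{βt}. -/

import Mathlib

/-- The m-th triangular number. -/
def T (m : ℕ) : ℕ := m * (m + 1) / 2
/-- The pseudo-Smarandache function: the least positive m with n ∣ T m. -/
noncomputable def Z (n : ℕ) : ℕ := sInf {m : ℕ | 0 < m ∧ n ∣ T m}

lemma two_mul_T (m : ℕ) : 2 * T m = m * (m + 1) := by
  have h : 2 ∣ m * (m + 1) := (Nat.even_mul_succ_self m).two_dvd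
  exact Nat.mul_div_cancel' h

lemma Z_spec (n : ℕ) (hn : 0 < n) : 0 < Z n ∧ n ∣ T (Z n) := by
  have hne : {m : ℕ | 0 < m ∧ n ∣ T m}.Nonempty := by
    refine ⟨2 * n - 1, by omega, ?_⟩
    have hm : 2 * n - 1 + 1 = 2 * n := by omega
    have h2 : 2 * T (2 * n - 1) = (2 * n - 1) * (2 * n) := by rw [two_mul_T, hm]
    have : T (2 * n - 1) = n * (2 * n - 1) := by
      apply Nat.eq_of_mul_eq_mul_left (show 0 < 2 by norm_num)
      rw [h2]; ring
    exact ⟨2 * n - 1, this⟩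
  exact Nat.sInf_mem hne

lemma gcd_split {m k : ℕ} (hd : 2 * k ∣ m * (m + 1)) :
    Nat.gcd (2 * k) m * Nat.gcd (2 * k) (m + 1) = 2 * k := by
  have cop : Nat.Coprime (Nat.gcd (2 * k) m) (Nat.gcd (2 * k) (m + 1)) :=
    Nat.Coprime.coprime_dvd_left (Nat.gcd_dvd_right _ _)
      (Nat.Coprime.coprime_dvd_right (Nat.gcd_dvd_right _ _) (by simp : Nat.Coprime m (m + 1)))
  have dvd2 : Nat.gcd (2 * k) m * Nat.gcd (2 * k) (m + 1) ∣ 2 * k :=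
    cop.mul_dvd_of_dvd_of_dvd (Nat.gcd_dvd_left _ _) (Nat.gcd_dvd_left _ _)
  have dvd1 : 2 * k ∣ Nat.gcd (2 * k) m * Nat.gcd (2 * k) (m + 1) := by
    have h1 := gcd_mul_dvd_mul_gcd (2 * k) m (m + 1)
    simp only [gcd_eq_nat_gcd] at h1
    rwa [Nat.gcd_eq_left hd] at h1
  exact Nat.dvd_antisymm dvd2 dvd1

lemma harmonic_le (D : ℕ) : ∑ a ∈ Finset.Icc 1 D, ((a : ℝ))⁻¹ ≤ 1 + Real.log D := by
  induction D with
  | zero => simp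
  | succ D ih =>
    rw [show Finset.Icc 1 (D+1) = insert (D+1) (Finset.Icc 1 D) by ext x; simp [Finset.mem_Icc]; omega, Finset.sum_insert (by simp)]
    rcases Nat.eq_zero_or_pos D with h0 | hD
    · subst h0; simp
    · have hD1 : (0:ℝ) < D := by exact_mod_cast hD
      have hstep : (1 : ℝ) / (D + 1) ≤ Real.log (D + 1) - Real.log D := by
        have hx : (0:ℝ) < (D:ℝ) / (D + 1) := by positivity
        have := Real.log_le_sub_one_of_pos hx
        rw [Real.log_div (by positivity) (by positivity)] at this
        have he : (D:ℝ) / (D + 1) - 1 = -(1 / (D + 1)) := by field_simp; ring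
        rw [he] at this
        linarith
      have : ((D:ℝ) + 1)⁻¹ ≤ Real.log (D + 1) - Real.log D := by
        rw [← one_div]; exact_mod_cast hstep
      push_cast
      push_cast at ih
      linarith

lemma count_bound (M D : ℕ) :
    ((((((Finset.Icc 1 D) ×ˢ (Finset.Icc 1 D)).filter fun p => p.1 * p.2 ≤ D) ×ˢ Finset.Icc 1 M).filter
        fun x => x.1.1 ∣ x.2 ∧ x.1.2 ∣ x.2 + 1).card : ℝ)
      ≤ M * (1 + Real.log D) ^ 2 + D * (1 + Real.log D) := by
  set A := Finset.Icc 1 D with hA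
  set P := (A ×ˢ A).filter (fun p => p.1 * p.2 ≤ D) with hP
  set Tr := (P ×ˢ Finset.Icc 1 M).filter
      (fun x => x.1.1 ∣ x.2 ∧ x.1.2 ∣ x.2 + 1) with hTr
  have hHnn : (0:ℝ) ≤ ∑ a ∈ A, ((a : ℝ))⁻¹ := Finset.sum_nonneg (by intros; positivity)
  have hH : ∑ a ∈ A, ((a : ℝ))⁻¹ ≤ 1 + Real.log D := harmonic_le D
  have hlognn : (0:ℝ) ≤ 1 + Real.log D := by
    rcases Nat.eq_zero_or_pos D with h0 | hD
    · subst h0; simp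
    · have : (0:ℝ) ≤ Real.log D := Real.log_nonneg (by exact_mod_cast hD)
      linarith
  -- fiber over p has at most M / (p.1*p.2) + 1 elements
  have key : ∀ p ∈ P, ((Tr.filter fun x => x.1 = p).card) ≤ M / (p.1 * p.2) + 1 := by
    intro p hp
    have hp1 : 1 ≤ p.1 ∧ p.1 ≤ D ∧ 1 ≤ p.2 ∧ p.2 ≤ D := by
      simp only [hP, Finset.mem_filter, Finset.mem_product, hA, Finset.mem_Icc] at hp
      exact ⟨hp.1.1.1, hp.1.1.2, hp.1.2.1, hp.1.2.2⟩
    have hq : 0 < p.1 * p.2 := Nat.mul_pos (by omega) (by omega)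
    calc (Tr.filter fun x => x.1 = p).card
        ≤ (Finset.range (M / (p.1 * p.2) + 1)).card := by
          apply Finset.card_le_card_of_injOn (fun x => x.2 / (p.1 * p.2))
          · intro x hx
            simp only [hTr, Finset.mem_coe, Finset.mem_filter, Finset.mem_product, Finset.mem_Icc] at hx
            simp only [Finset.mem_coe, Finset.mem_range]
            exact Nat.lt_succ_of_le (Nat.div_le_div_right hx.1.1.2.2)
          · intro x hx y hy hxy
            simp only [Finset.coe_filter, Set.mem_setOf_eq, hTr, Finset.mem_filter,
              Finset.mem_product, Finset.mem_Icc] at hx hy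
            obtain ⟨⟨⟨-, -, -⟩, hax, hbx⟩, hx1⟩ := hx
            obtain ⟨⟨⟨-, -, -⟩, hay, hby⟩, hy1⟩ := hy
            rw [hx1] at hax hbx
            rw [hy1] at hay hby
            simp only at hxy
            have cop : Nat.Coprime p.1 p.2 :=
              Nat.Coprime.coprime_dvd_left hax
                (Nat.Coprime.coprime_dvd_right hbx (by simp : Nat.Coprime x.2 (x.2+1)))
            have mono : ∀ u v : ℕ, p.1 ∣ u → p.2 ∣ u + 1 → p.1 ∣ v → p.2 ∣ v + 1 →
                u < v → u / (p.1 * p.2) < v / (p.1 * p.2) := by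
              intro u v hau hbu hav hbv huv
              have hd : p.1 * p.2 ∣ v - u := by
                apply cop.mul_dvd_of_dvd_of_dvd (Nat.dvd_sub hav hau)
                have := Nat.dvd_sub hbv hbu
                simpa [Nat.succ_sub_succ] using this
              have hle : u + p.1 * p.2 ≤ v := by
                have := Nat.le_of_dvd (by omega) hd
                omega
              calc u / (p.1 * p.2) < u / (p.1 * p.2) + 1 := Nat.lt_succ_self _
                _ = (u + p.1 * p.2) / (p.1 * p.2) := (Nat.add_div_right u hq).symm
                _ ≤ v / (p.1 * p.2) := Nat.div_le_div_right hle
            have h2 : x.2 = y.2 := by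
              rcases lt_trichotomy x.2 y.2 with h | h | h
              · exact absurd hxy (Nat.ne_of_lt (mono _ _ hax hbx hay hby h))
              · exact h
              · exact absurd hxy.symm (Nat.ne_of_lt (mono _ _ hay hby hax hbx h))
            exact Prod.ext (hx1.trans hy1.symm) h2
      _ = M / (p.1 * p.2) + 1 := by simp
  -- decompose card fiberwise
  have hcard : Tr.card = ∑ p ∈ P, (Tr.filter fun x => x.1 = p).card := by
    apply Finset.card_eq_sum_card_fiberwise
    intro x hx
    simp only [hTr, Finset.mem_coe, Finset.mem_filter, Finset.mem_product] at hx
    exact hx.1.1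
  have step1 : (Tr.card : ℝ) ≤ ∑ p ∈ P, ((M : ℝ) / (p.1 * p.2) + 1) := by
    rw [hcard]
    push_cast
    apply Finset.sum_le_sum
    intro p hp
    have hcast : ((Tr.filter fun x => x.1 = p).card : ℝ) ≤ ((M / (p.1 * p.2) + 1 : ℕ) : ℝ) := by
      exact_mod_cast key p hp
    refine hcast.trans ?_
    push_cast
    have h2 : ((M / (p.1 * p.2) : ℕ) : ℝ) ≤ (M : ℝ) / ((p.1 * p.2 : ℕ) : ℝ) := Nat.cast_div_le
    push_cast at h2
    linarith
  -- first part of the sum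
  have part1 : ∑ p ∈ P, (M : ℝ) / (p.1 * p.2) ≤ M * (1 + Real.log D) ^ 2 := by
    have hsub : ∑ p ∈ P, (M : ℝ) / (p.1 * p.2) ≤ ∑ p ∈ A ×ˢ A, (M : ℝ) / (p.1 * p.2) := by
      apply Finset.sum_le_sum_of_subset_of_nonneg (Finset.filter_subset _ _)
      intros; positivity
    have heq : ∑ p ∈ A ×ˢ A, (M : ℝ) / (p.1 * p.2)
        = (M : ℝ) * ((∑ a ∈ A, ((a:ℝ))⁻¹) * (∑ b ∈ A, ((b:ℝ))⁻¹)) := by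
      rw [Finset.sum_product, Finset.sum_mul_sum, Finset.mul_sum]
      refine Finset.sum_congr rfl fun a _ => ?_
      rw [Finset.mul_sum]
      refine Finset.sum_congr rfl fun b _ => ?_
      rw [div_eq_mul_inv, mul_inv]
    have hsq : (∑ a ∈ A, ((a:ℝ))⁻¹) * (∑ b ∈ A, ((b:ℝ))⁻¹) ≤ (1 + Real.log D) ^ 2 := by
      rw [sq]
      exact mul_le_mul hH hH hHnn hlognn
    calc ∑ p ∈ P, (M : ℝ) / (p.1 * p.2) ≤ ∑ p ∈ A ×ˢ A, (M : ℝ) / (p.1 * p.2) := hsub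
      _ = (M : ℝ) * ((∑ a ∈ A, ((a:ℝ))⁻¹) * (∑ b ∈ A, ((b:ℝ))⁻¹)) := heq
      _ ≤ M * (1 + Real.log D) ^ 2 := by
          apply mul_le_mul_of_nonneg_left hsq (by positivity)
  -- second part: card of P
  have part2 : (P.card : ℝ) ≤ D * (1 + Real.log D) := by
    have hc2 : P.card = ∑ a ∈ A, (P.filter fun p => p.1 = a).card := by
      apply Finset.card_eq_sum_card_fiberwise
      intro p hp
      simp only [hP, Finset.mem_coe, Finset.mem_filter, Finset.mem_product] at hp
      exact hp.1.1
    have fib : ∀ a ∈ A, (P.filter fun p => p.1 = a).card ≤ D / a := by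
      intro a ha
      have ha1 : 1 ≤ a := (Finset.mem_Icc.mp ha).1
      calc (P.filter fun p => p.1 = a).card ≤ (Finset.Icc 1 (D / a)).card := by
            apply Finset.card_le_card_of_injOn (fun p => p.2)
            · intro p hp
              simp only [hP, Finset.mem_coe, Finset.mem_filter, Finset.mem_product, hA, Finset.mem_Icc] at hp ⊢
              obtain ⟨⟨⟨-, hp2⟩, hmul⟩, hp1⟩ := hp
              refine ⟨hp2.1, ?_⟩
              rw [Nat.le_div_iff_mul_le (by omega), mul_comm]
              rw [hp1] at hmul
              exact hmul
            · intro p hp q hq hpq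
              simp only [Finset.coe_filter, Set.mem_setOf_eq] at hp hq
              exact Prod.ext (hp.2.trans hq.2.symm) hpq
        _ = D / a := by simp
    have : (P.card : ℝ) ≤ ∑ a ∈ A, ((D / a : ℕ) : ℝ) := by
      rw [hc2]
      push_cast
      apply Finset.sum_le_sum
      intro a ha
      exact_mod_cast fib a ha
    refine this.trans ?_
    have : ∑ a ∈ A, ((D / a : ℕ) : ℝ) ≤ ∑ a ∈ A, (D : ℝ) * ((a:ℝ))⁻¹ := by
      apply Finset.sum_le_sum
      intro a _
      rw [← div_eq_mul_inv]
      exact_mod_cast (Nat.cast_div_le : ((D / a : ℕ) : ℝ) ≤ _)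
    refine this.trans ?_
    rw [← Finset.mul_sum]
    exact mul_le_mul_of_nonneg_left hH (by positivity)
  -- assemble
  have : ∑ p ∈ P, ((M : ℝ) / (p.1 * p.2) + 1) = (∑ p ∈ P, (M : ℝ) / (p.1 * p.2)) + P.card := by
    rw [Finset.sum_add_distrib, Finset.sum_const, nsmul_eq_mul, mul_one]
  rw [this] at step1
  linarith


set_option maxHeartbeats 2000000 in
theorem stmt_17 (β : ℝ) (hβ1 : 1 / 2 < β) (hβ2 : β < 1) (t : ℕ) (ht : 5 ≤ t) :
    ({n : ℕ | Real.exp (t - 1 : ℝ) < n ∧ (n : ℝ) ≤ Real.exp t ∧ (Z n : ℝ) < (n : ℝ) ^ β}.ncard : ℝ)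
      ≤ 196 * t ^ 2 * Real.exp (β * t) := by
  have htR : (5:ℝ) ≤ (t:ℝ) := by exact_mod_cast ht
  set S := {n : ℕ | Real.exp (t - 1 : ℝ) < n ∧ (n : ℝ) ≤ Real.exp t ∧ (Z n : ℝ) < (n : ℝ) ^ β}
    with hS
  set M := Nat.floor (Real.exp (β * t)) with hM
  set D := Nat.floor (Real.exp ((2 * β - 1) * t + 2)) with hD
  set P := ((Finset.Icc 1 D) ×ˢ (Finset.Icc 1 D)).filter (fun p => p.1 * p.2 ≤ D) with hP
  set Tr := (P ×ˢ Finset.Icc 1 M).filter (fun x => x.1.1 ∣ x.2 ∧ x.1.2 ∣ x.2 + 1) with hTr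
  set F : ℕ → (ℕ × ℕ) × ℕ := fun n =>
    ((Nat.gcd (2 * (T (Z n) / n)) (Z n), Nat.gcd (2 * (T (Z n) / n)) (Z n + 1)), Z n) with hF
  -- facts for each n in S
  have facts : ∀ n ∈ S, 0 < T (Z n) / n ∧ n * (T (Z n) / n) = T (Z n) ∧
      Nat.gcd (2 * (T (Z n) / n)) (Z n) * Nat.gcd (2 * (T (Z n) / n)) (Z n + 1)
        = 2 * (T (Z n) / n) ∧ F n ∈ Tr := by
    intro n hn
    obtain ⟨h1, h2, h3⟩ := hn
    have hn0 : 0 < n := by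
      have : (0:ℝ) < n := lt_trans (Real.exp_pos _) h1
      exact_mod_cast this
    obtain ⟨hm, hdvd⟩ := Z_spec n hn0
    set m := Z n with hm'
    set k := T m / n with hk'
    have hk : n * k = T m := Nat.mul_div_cancel' hdvd
    have hTm : 0 < T m := by
      have h2T := two_mul_T m
      have : 0 < m * (m + 1) := Nat.mul_pos hm (Nat.succ_pos m)
      omega
    have hkpos : 0 < k := by
      rcases Nat.eq_zero_or_pos k with h | h
      · rw [h, mul_zero] at hk; omega
      · exact h
    have hd : 2 * k ∣ m * (m + 1) := ⟨n, by rw [← two_mul_T, ← hk]; ring⟩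
    have hab := gcd_split hd
    refine ⟨hkpos, hk, hab, ?_⟩
    -- real bounds
    have hmE : (m : ℝ) ≤ Real.exp (β * t) := by
      have hr1 : (n : ℝ) ^ β ≤ (Real.exp t) ^ (β:ℝ) :=
        Real.rpow_le_rpow (Nat.cast_nonneg n) h2 (by linarith)
      have hr2 : (Real.exp t) ^ (β:ℝ) = Real.exp (t * β) := (Real.exp_mul t β).symm
      have : (m : ℝ) < Real.exp (t * β) := lt_of_lt_of_le h3 (by rw [← hr2]; exact hr1)
      rw [mul_comm] at this
      linarith
    have hmM : m ≤ M := Nat.le_floor hmE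
    have h2k : ((2 * k : ℕ) : ℝ) ≤ Real.exp ((2 * β - 1) * t + 2) := by
      have hcast : ((2 * k : ℕ) : ℝ) * n = (m : ℝ) * (m + 1) := by
        have : 2 * (n * k) = m * (m + 1) := by rw [hk, two_mul_T]
        exact_mod_cast by push_cast [← this]; ring
      have hm1 : (1:ℝ) ≤ (m:ℝ) := by exact_mod_cast hm
      have hmul : (m : ℝ) * (m + 1) ≤ 2 * Real.exp (β * t) ^ 2 := by nlinarith
      have hkn : (0:ℝ) ≤ ((2 * k : ℕ) : ℝ) := Nat.cast_nonneg _
      have e1 : ((2 * k : ℕ) : ℝ) * Real.exp ((t:ℝ) - 1) ≤ 2 * Real.exp (β * t) ^ 2 := by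
        nlinarith [mul_le_mul_of_nonneg_left h1.le hkn]
      have e2 : ((2 * k : ℕ) : ℝ) ≤ 2 * Real.exp (β * t) ^ 2 / Real.exp ((t:ℝ) - 1) := by
        rw [le_div_iff₀ (Real.exp_pos _)]; exact e1
      refine e2.trans ?_
      rw [div_le_iff₀ (Real.exp_pos _), ← Real.exp_add]
      have hsq : Real.exp (β * t) ^ 2 = Real.exp (2 * β * t) := by
        rw [sq, ← Real.exp_add]; ring_nf
      rw [hsq]
      have h2e : (2:ℝ) ≤ Real.exp 1 := by linarith [Real.add_one_le_exp 1]
      calc 2 * Real.exp (2 * β * t) ≤ Real.exp 1 * Real.exp (2 * β * t) := by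
            nlinarith [Real.exp_pos (2 * β * (t:ℝ))]
        _ = Real.exp (1 + 2 * β * t) := by rw [← Real.exp_add]
        _ = Real.exp ((2 * β - 1) * t + 2 + ((t:ℝ) - 1)) := by congr 1; ring
    have h2kD : 2 * k ≤ D := Nat.le_floor h2k
    -- membership
    have hga : 0 < Nat.gcd (2 * k) m := Nat.gcd_pos_of_pos_left m (by omega)
    have hgb : 0 < Nat.gcd (2 * k) (m + 1) := Nat.gcd_pos_of_pos_left (m + 1) (by omega)
    have haD : Nat.gcd (2 * k) m ≤ D := by
      calc Nat.gcd (2 * k) m ≤ 2 * k := Nat.le_of_dvd (by omega) (Nat.gcd_dvd_left _ _)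
        _ ≤ D := h2kD
    have hbD : Nat.gcd (2 * k) (m + 1) ≤ D := by
      calc Nat.gcd (2 * k) (m + 1) ≤ 2 * k := Nat.le_of_dvd (by omega) (Nat.gcd_dvd_left _ _)
        _ ≤ D := h2kD
    simp only [hTr, hP, hF, Finset.mem_filter, Finset.mem_product, Finset.mem_Icc]
    exact ⟨⟨⟨⟨⟨hga, haD⟩, hgb, hbD⟩, by rw [hab]; exact h2kD⟩, hm, hmM⟩,
      Nat.gcd_dvd_right _ _, Nat.gcd_dvd_right _ _⟩
  -- injectivity
  have hinj : Set.InjOn F S := by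
    intro n1 hn1 n2 hn2 heq
    obtain ⟨hk1, hm1, hab1, -⟩ := facts n1 hn1
    obtain ⟨hk2, hm2, hab2, -⟩ := facts n2 hn2
    have hZ : Z n1 = Z n2 := congrArg Prod.snd heq
    have ha : Nat.gcd (2 * (T (Z n1) / n1)) (Z n1) = Nat.gcd (2 * (T (Z n2) / n2)) (Z n2) :=
      congrArg (fun x => x.1.1) heq
    have hb : Nat.gcd (2 * (T (Z n1) / n1)) (Z n1 + 1)
        = Nat.gcd (2 * (T (Z n2) / n2)) (Z n2 + 1) := congrArg (fun x => x.1.2) heq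
    have hkk : T (Z n1) / n1 = T (Z n2) / n2 := by
      have : 2 * (T (Z n1) / n1) = 2 * (T (Z n2) / n2) := by
        rw [← hab1, ← hab2, ha, hb]
      omega
    have : n1 * (T (Z n1) / n1) = n2 * (T (Z n1) / n1) := by
      rw [hm1, hkk, hm2, ← hZ]
    exact Nat.eq_of_mul_eq_mul_right hk1 (by linarith [this] )
    -- image is inside Tr
  have himg : F '' S ⊆ ↑Tr := by
    rintro x ⟨n, hn, rfl⟩
    exact (facts n hn).2.2.2
  -- count
  have hcount : (S.ncard : ℝ) ≤ (Tr.card : ℝ) := by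
    have h1 : (F '' S).ncard = S.ncard := Set.ncard_image_of_injOn hinj
    have h2 : (F '' S).ncard ≤ (Tr : Set ((ℕ × ℕ) × ℕ)).ncard :=
      Set.ncard_le_ncard himg Tr.finite_toSet
    rw [Set.ncard_coe_finset] at h2
    exact_mod_cast h1 ▸ h2
  have hmain : (Tr.card : ℝ) ≤ M * (1 + Real.log D) ^ 2 + D * (1 + Real.log D) :=
    count_bound M D
  -- numeric bounds
  have hMle : (M : ℝ) ≤ Real.exp (β * t) := Nat.floor_le (Real.exp_pos _).le
  have hDle : (D : ℝ) ≤ Real.exp ((2 * β - 1) * t + 2) := Nat.floor_le (Real.exp_pos _).le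
  have htnn : (0:ℝ) ≤ (t:ℝ) := by linarith
  have hlogD : Real.log D ≤ (2 * β - 1) * t + 2 := by
    rcases Nat.eq_zero_or_pos D with h0 | hDp
    · rw [h0]
      push_cast
      rw [Real.log_zero]
      nlinarith
    · have hD1 : (0:ℝ) < D := by exact_mod_cast hDp
      calc Real.log D ≤ Real.log (Real.exp ((2 * β - 1) * t + 2)) :=
            Real.log_le_log hD1 hDle
        _ = (2 * β - 1) * t + 2 := Real.log_exp _
  have hlognn : (0:ℝ) ≤ 1 + Real.log D := by
    rcases Nat.eq_zero_or_pos D with h0 | hDp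
    · rw [h0]; push_cast; rw [Real.log_zero]; norm_num
    · have : (0:ℝ) ≤ Real.log D := Real.log_nonneg (by exact_mod_cast hDp)
      linarith
  have h1log : 1 + Real.log D ≤ 2 * t := by
    have : (2 * β - 1) * t ≤ 1 * t := mul_le_mul_of_nonneg_right (by linarith) htnn
    linarith
  have hexp1 : Real.exp ((2 * β - 1) * t + 2) ≤ 8 * Real.exp (β * t) := by
    rw [Real.exp_add]
    have ha : Real.exp ((2 * β - 1) * t) ≤ Real.exp (β * t) := by
      apply Real.exp_le_exp.mpr
      have : (2 * β - 1) * t ≤ β * t := mul_le_mul_of_nonneg_right (by linarith) htnn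
      linarith
    have hb : Real.exp 2 ≤ 8 := by
      have h1 : Real.exp 1 < 2.7182818286 := Real.exp_one_lt_d9
      have h2 : Real.exp 2 = Real.exp 1 * Real.exp 1 := by rw [← Real.exp_add]; norm_num
      nlinarith [Real.exp_pos 1]
    nlinarith [Real.exp_pos ((2 * β - 1) * (t:ℝ)), Real.exp_pos (β * (t:ℝ))]
  have hEnn : (0:ℝ) < Real.exp (β * t) := Real.exp_pos _
  have hfirst : (M : ℝ) * (1 + Real.log D) ^ 2 ≤ 4 * t ^ 2 * Real.exp (β * t) := by
    have hsq : (1 + Real.log D) ^ 2 ≤ (2 * t) ^ 2 := by nlinarith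
    have : (M : ℝ) * (1 + Real.log D) ^ 2 ≤ Real.exp (β * t) * (2 * t) ^ 2 := by
      apply mul_le_mul hMle hsq (by positivity) hEnn.le
    nlinarith
  have hsecond : (D : ℝ) * (1 + Real.log D) ≤ 16 * t ^ 2 * Real.exp (β * t) := by
    have h1 : (D : ℝ) * (1 + Real.log D) ≤ (8 * Real.exp (β * t)) * (2 * t) := by
      apply mul_le_mul (hDle.trans hexp1) h1log hlognn (by positivity)
    have ht2 : (t:ℝ) ≤ (t:ℝ) ^ 2 := by nlinarith
    nlinarith
  calc (S.ncard : ℝ) ≤ (Tr.card : ℝ) := hcount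
    _ ≤ M * (1 + Real.log D) ^ 2 + D * (1 + Real.log D) := hmain
    _ ≤ 4 * t ^ 2 * Real.exp (β * t) + 16 * t ^ 2 * Real.exp (β * t) := by linarith
    _ ≤ 196 * t ^ 2 * Real.exp (β * t) := by nlinarith
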